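/- Let ω₁(x,y) = x²·cos y − y·sin y + y²·sin x + x·cos x, ω₂(x,y) = 4(y·cos x + x·sin y), and let Q be as specified (with real constant C). Then θ₁ := Q/ω₁ satisfies, on the open set where ω₁ ≠ 0, the Moutard system (ω₁θ₁)_x = −ω₁²(ω₂/ω₁)_y and (ω₁θ₁)_y = ω₁²(ω₂/ω₁)_x. -/

import Mathlib

noncomputable def pdx (f : ℝ → ℝ → ℝ) : ℝ → ℝ → ℝ := fun x y => deriv (fun t => f t y) x
noncomputable def pdy (f : ℝ → ℝ → ℝ) : ℝ → ℝ → ℝ := fun x y => deriv (fun t => f x t) y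
noncomputable def lap (f : ℝ → ℝ → ℝ) : ℝ → ℝ → ℝ :=
  fun x y => pdx (pdx f) x y + pdy (pdy f) x y

noncomputable def Q (C x y : ℝ) : ℝ :=
  -x ^ 4 - y ^ 4 - 4 * x ^ 2 * y * Real.sin x * Real.sin y
  + x ^ 2 * (-8 * Real.cos y * Real.sin x - 2 * (Real.sin y) ^ 2 - 1)
  + 4 * x * y ^ 2 * Real.cos x * Real.cos y
  - 16 * x * y * Real.cos x * Real.sin y
  + 2 * x * Real.cos x * (-8 * Real.cos y - Real.sin x)
  + y ^ 2 * (-8 * Real.cos y * Real.sin x + 2 * (Real.sin x) ^ 2 - 3)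
  + 2 * y * Real.sin y * (Real.cos y + 8 * Real.sin x)
  + 16 * Real.cos y * Real.sin x + (Real.sin x) ^ 2 - (Real.sin y) ^ 2
  + 4 * C + 1

noncomputable def ω₁ (x y : ℝ) : ℝ :=
  x ^ 2 * Real.cos y - y * Real.sin y + y ^ 2 * Real.sin x + x * Real.cos x

noncomputable def ω₂ (x y : ℝ) : ℝ := 4 * (y * Real.cos x + x * Real.sin y)

/-- Generic derivative of a "shape" function: polynomial plus trig combinations. -/
lemma hasDerivAt_shape (a b c d e f g h k m t : ℝ) :
    HasDerivAt (fun t : ℝ => (-t^4 + a*t^2 + b)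
        + (c*t^2 + d*t + e) * Real.sin t
        + (f*t^2 + g*t + h) * Real.cos t
        + (k*t) * (Real.sin t * Real.cos t)
        + m * Real.sin t ^ 2)
      ((-(4*t^3) + 2*a*t)
        + ((2*c*t + d) * Real.sin t + (c*t^2 + d*t + e) * Real.cos t)
        + ((2*f*t + g) * Real.cos t - (f*t^2 + g*t + h) * Real.sin t)
        + (k * (Real.sin t * Real.cos t) + (k*t) * (Real.cos t * Real.cos t - Real.sin t * Real.sin t))
        + m * (2 * Real.sin t * Real.cos t)) t := by
  have hs := Real.hasDerivAt_sin t
  have hc := Real.hasDerivAt_cos t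
  have hid : HasDerivAt (fun u : ℝ => u) 1 t := hasDerivAt_id t
  have hP : HasDerivAt (fun u : ℝ => -u^4 + a*u^2 + b) (-(4*t^3) + 2*a*t) t := by
    have := (((hasDerivAt_pow 4 t).neg).add ((hasDerivAt_pow 2 t).const_mul a)).add_const b
    exact this.congr_deriv (by push_cast; ring)
  have hS : HasDerivAt (fun u : ℝ => c*u^2 + d*u + e) (2*c*t + d) t := by
    have := (((hasDerivAt_pow 2 t).const_mul c).add (hid.const_mul d)).add_const e
    exact this.congr_deriv (by push_cast; ring)
  have hCq : HasDerivAt (fun u : ℝ => f*u^2 + g*u + h) (2*f*t + g) t := by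
    have := (((hasDerivAt_pow 2 t).const_mul f).add (hid.const_mul g)).add_const h
    exact this.congr_deriv (by push_cast; ring)
  have hK : HasDerivAt (fun u : ℝ => k*u) k t := by
    simpa using hid.const_mul k
  have h1 := hS.mul hs
  have h2 := hCq.mul hc
  have h3 := hK.mul (hs.mul hc)
  have h4 := (hs.pow 2).const_mul m
  have := (((hP.add h1).add h2).add h3).add h4
  exact this.congr_deriv (by push_cast; simp only [Pi.mul_apply]; ring)

theorem theta1_satisfies_moutard_system (C : ℝ) :
    ∀ x y : ℝ, ω₁ x y ≠ 0 →
      pdx (fun a b => ω₁ a b * (Q C a b / ω₁ a b)) x y =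
        -(ω₁ x y) ^ 2 * pdy (fun s t => ω₂ s t / ω₁ s t) x y ∧
      pdy (fun a b => ω₁ a b * (Q C a b / ω₁ a b)) x y =
        (ω₁ x y) ^ 2 * pdx (fun s t => ω₂ s t / ω₁ s t) x y := by
  intro x y h
  have hW2 : (ω₁ x y)^2 ≠ 0 := pow_ne_zero 2 h
  constructor
  · -- x-derivative part
    -- derivative of ω₂ x · and ω₁ x · in the second variable
    have h1 : HasDerivAt (fun t => ω₂ x t) (4*(Real.cos x + x*Real.cos y)) y := by
      unfold ω₂
      have := (((hasDerivAt_id y).mul_const (Real.cos x)).add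
        ((Real.hasDerivAt_sin y).const_mul x)).const_mul (4:ℝ)
      exact this.congr_deriv (by ring)
    have h2 : HasDerivAt (fun t => ω₁ x t)
        (-(x^2*Real.sin y) - (Real.sin y + y*Real.cos y) + 2*y*Real.sin x) y := by
      unfold ω₁
      have hA := (Real.hasDerivAt_cos y).const_mul ((x:ℝ)^2)
      have hB := (hasDerivAt_id y).mul (Real.hasDerivAt_sin y)
      have hC := (hasDerivAt_pow 2 y).mul_const (Real.sin x)
      have := ((hA.sub hB).add hC).add_const (x*Real.cos x)
      exact this.congr_deriv (by push_cast; simp only [id_eq]; ring)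
    have hq := h1.div h2 h
    have hB : pdy (fun s t => ω₂ s t / ω₁ s t) x y =
        ((4*(Real.cos x + x*Real.cos y)) * ω₁ x y -
          ω₂ x y * (-(x^2*Real.sin y) - (Real.sin y + y*Real.cos y) + 2*y*Real.sin x)) /
          (ω₁ x y)^2 := by
      simp only [pdy]
      exact hq.deriv
    -- rewrite Q in the x variable in "shape" form
    have eQ : (fun t => Q C t y) = (fun t : ℝ =>
        (-t^4 + (-(2*Real.sin y^2+1))*t^2 +
          (-y^4 - 3*y^2 + 2*y*Real.sin y*Real.cos y - Real.sin y^2 + 4*C + 1))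
        + ((-4*y*Real.sin y - 8*Real.cos y)*t^2 + (0:ℝ)*t +
            (-8*y^2*Real.cos y + 16*y*Real.sin y + 16*Real.cos y)) * Real.sin t
        + ((0:ℝ)*t^2 + (4*y^2*Real.cos y - 16*y*Real.sin y - 16*Real.cos y)*t + (0:ℝ)) * Real.cos t
        + ((-2:ℝ)*t) * (Real.sin t * Real.cos t)
        + (2*y^2+1) * Real.sin t ^ 2) := by
      funext t; unfold Q; ring
    have hQd := hasDerivAt_shape (-(2*Real.sin y^2+1))
        (-y^4 - 3*y^2 + 2*y*Real.sin y*Real.cos y - Real.sin y^2 + 4*C + 1)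
        (-4*y*Real.sin y - 8*Real.cos y) 0
        (-8*y^2*Real.cos y + 16*y*Real.sin y + 16*Real.cos y)
        0 (4*y^2*Real.cos y - 16*y*Real.sin y - 16*Real.cos y) 0
        (-2) (2*y^2+1) x
    rw [← eQ] at hQd
    have hA : pdx (fun a b => ω₁ a b * (Q C a b / ω₁ a b)) x y =
        deriv (fun t => Q C t y) x := by
      simp only [pdx]
      apply Filter.EventuallyEq.deriv_eq
      have hcont : ContinuousAt (fun t => ω₁ t y) x := by unfold ω₁; fun_prop
      filter_upwards [hcont.eventually_ne h] with t ht
      field_simp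
    have hcancel : -(ω₁ x y)^2 *
        (((4*(Real.cos x + x*Real.cos y)) * ω₁ x y -
          ω₂ x y * (-(x^2*Real.sin y) - (Real.sin y + y*Real.cos y) + 2*y*Real.sin x)) /
          (ω₁ x y)^2) =
        -((4*(Real.cos x + x*Real.cos y)) * ω₁ x y -
          ω₂ x y * (-(x^2*Real.sin y) - (Real.sin y + y*Real.cos y) + 2*y*Real.sin x)) := by
      field_simp
      try ring
    rw [hA, hQd.deriv, hB, hcancel]
    unfold ω₁ ω₂
    linear_combination (2*x) * Real.sin_sq_add_cos_sq x + (4*x^3) * Real.sin_sq_add_cos_sq y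
  · -- y-derivative part
    have h1 : HasDerivAt (fun t => ω₂ t y) (4*(Real.sin y - y*Real.sin x)) x := by
      unfold ω₂
      have hA := (Real.hasDerivAt_cos x).const_mul y
      have hB := (hasDerivAt_id x).mul_const (Real.sin y)
      have := (hA.add hB).const_mul (4:ℝ)
      exact this.congr_deriv (by ring)
    have h2 : HasDerivAt (fun t => ω₁ t y)
        (2*x*Real.cos y + y^2*Real.cos x + (Real.cos x - x*Real.sin x)) x := by
      unfold ω₁
      have hA := (hasDerivAt_pow 2 x).mul_const (Real.cos y)
      have hB := (Real.hasDerivAt_sin x).const_mul ((y:ℝ)^2)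
      have hC := (hasDerivAt_id x).mul (Real.hasDerivAt_cos x)
      have := ((hA.sub_const (y*Real.sin y)).add hB).add hC
      exact this.congr_deriv (by push_cast; simp only [id_eq]; ring)
    have hq := h1.div h2 h
    have hB : pdx (fun s t => ω₂ s t / ω₁ s t) x y =
        ((4*(Real.sin y - y*Real.sin x)) * ω₁ x y -
          ω₂ x y * (2*x*Real.cos y + y^2*Real.cos x + (Real.cos x - x*Real.sin x))) /
          (ω₁ x y)^2 := by
      simp only [pdx]
      exact hq.deriv
    have eQ : (fun t => Q C x t) = (fun t : ℝ =>
        (-t^4 + (2*Real.sin x^2 - 3)*t^2 +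
          (-x^4 - x^2 - 2*x*Real.sin x*Real.cos x + Real.sin x^2 + 4*C + 1))
        + ((0:ℝ)*t^2 + (-4*x^2*Real.sin x - 16*x*Real.cos x + 16*Real.sin x)*t + (0:ℝ)) * Real.sin t
        + ((4*x*Real.cos x - 8*Real.sin x)*t^2 + (0:ℝ)*t +
            (-8*x^2*Real.sin x - 16*x*Real.cos x + 16*Real.sin x)) * Real.cos t
        + ((2:ℝ)*t) * (Real.sin t * Real.cos t)
        + (-2*x^2 - 1) * Real.sin t ^ 2) := by
      funext t; unfold Q; ring
    have hQd := hasDerivAt_shape (2*Real.sin x^2 - 3)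
        (-x^4 - x^2 - 2*x*Real.sin x*Real.cos x + Real.sin x^2 + 4*C + 1)
        0 (-4*x^2*Real.sin x - 16*x*Real.cos x + 16*Real.sin x) 0
        (4*x*Real.cos x - 8*Real.sin x) 0
        (-8*x^2*Real.sin x - 16*x*Real.cos x + 16*Real.sin x)
        2 (-2*x^2 - 1) y
    rw [← eQ] at hQd
    have hA : pdy (fun a b => ω₁ a b * (Q C a b / ω₁ a b)) x y =
        deriv (fun t => Q C x t) y := by
      simp only [pdy]
      apply Filter.EventuallyEq.deriv_eq
      have hcont : ContinuousAt (fun t => ω₁ x t) y := by unfold ω₁; fun_prop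
      filter_upwards [hcont.eventually_ne h] with t ht
      field_simp
    have hcancel : (ω₁ x y)^2 *
        (((4*(Real.sin y - y*Real.sin x)) * ω₁ x y -
          ω₂ x y * (2*x*Real.cos y + y^2*Real.cos x + (Real.cos x - x*Real.sin x))) /
          (ω₁ x y)^2) =
        ((4*(Real.sin y - y*Real.sin x)) * ω₁ x y -
          ω₂ x y * (2*x*Real.cos y + y^2*Real.cos x + (Real.cos x - x*Real.sin x))) := by
      field_simp
      try ring
    rw [hA, hQd.deriv, hB, hcancel]
    unfold ω₁ ω₂
    linear_combination (4*y + 4*y^3) * Real.sin_sq_add_cos_sq x + (2*y) * Real.sin_sq_add_cos_sq y
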